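/- Let (X,r) be a square-free solution with associated group G(X,r) = ⟨X | xy = (ˣy)(xʸ)⟩ and let L : G(X,r) → Sym(X) be the group homomorphism extending x ↦ L_x. Then the kernel K₀ = ker L is an abelian normal subgroup of G(X,r): any two elements u, v ∈ G with L_u = id and L_v = id commute. -/

import Mathlib

namespace YBPaper

variable {X : Type*}

/-- Left translation: `lact r x y = ˣy`. -/
def lact (r : X × X → X × X) (x y : X) : X := (r (x, y)).1

/-- Right translation: `ract r x y = xʸ`. -/
def ract (r : X × X → X × X) (x y : X) : X := (r (x, y)).2

def r12 (r : X × X → X × X) : X × X × X → X × X × X :=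
  fun p => ((r (p.1, p.2.1)).1, (r (p.1, p.2.1)).2, p.2.2)

def r23 (r : X × X → X × X) : X × X × X → X × X × X :=
  fun p => (p.1, r (p.2.1, p.2.2))

/-- A non-degenerate involutive square-free set-theoretic solution of the YBE. -/
structure IsSquareFreeSolution (r : X × X → X × X) : Prop where
  nondegL : ∀ x : X, Function.Bijective fun y => (r (x, y)).1
  nondegR : ∀ y : X, Function.Bijective fun x => (r (x, y)).2
  invol : ∀ p : X × X, r (r p) = p
  sqfree : ∀ x : X, r (x, x) = (x, x)
  braided : ∀ p : X × X × X, r12 r (r23 r (r12 r p)) = r23 r (r12 r (r23 r p))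

/-- `relk l k x y` means the images of `x` and `y` in the `k`-th retract coincide. -/
def relk (l : X → X → X) : ℕ → X → X → Prop
  | 0 => fun x y => x = y
  | (k+1) => fun x y => ∀ z : X, relk l k (l x z) (l y z)

/-- `mplLe l m` : the `m`-th retract is a one-element solution, i.e. `mpl ≤ m`. -/
def mplLe (l : X → X → X) (m : ℕ) : Prop := ∀ x y : X, relk l m x y

/-- `mplEq l m` : the multipermutation level is exactly `m`. -/
def mplEq (l : X → X → X) (m : ℕ) : Prop := mplLe l m ∧ ∀ k < m, ¬ mplLe l k

/-- The set of left translations, as permutations. -/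
def lperms (r : X × X → X × X) : Set (Equiv.Perm X) :=
  {σ : Equiv.Perm X | ∃ x : X, ∀ y : X, σ y = (r (x, y)).1}

/-- The YB permutation group `𝒢(X,r)`, generated by the left translations. -/
def Gcal (r : X × X → X × X) : Subgroup (Equiv.Perm X) := Subgroup.closure (lperms r)


/-- Relations of the structure group `G(X,r) = ⟨X ∣ xy = (ˣy)(xʸ)⟩`. -/
def structRels (r : X × X → X × X) : Set (FreeGroup X) :=
  {w | ∃ x y : X, w = FreeGroup.of x * FreeGroup.of y *
        (FreeGroup.of ((r (x, y)).1) * FreeGroup.of ((r (x, y)).2))⁻¹}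

section Aux

variable {r : X × X → X × X}

theorem auxInv1 (h : IsSquareFreeSolution r) (x y : X) :
    (r ((r (x, y)).1, (r (x, y)).2)).1 = x := by
  have := h.invol (x, y); simp only [Prod.mk.eta, this]

theorem auxInv2 (h : IsSquareFreeSolution r) (x y : X) :
    (r ((r (x, y)).1, (r (x, y)).2)).2 = y := by
  have := h.invol (x, y); simp only [Prod.mk.eta, this]

theorem auxSq1 (h : IsSquareFreeSolution r) (x : X) : (r (x, x)).1 = x := by rw [h.sqfree]
theorem auxSq2 (h : IsSquareFreeSolution r) (x : X) : (r (x, x)).2 = x := by rw [h.sqfree]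

theorem auxYB3 (h : IsSquareFreeSolution r) (a x y : X) :
    (r ((r (a, x)).2, y)).2 = (r ((r (a, (r (x, y)).1)).2, (r (x, y)).2)).2 := by
  have h3 := congrArg (fun p : X × X × X => p.2.2) (h.braided (a, x, y))
  simpa [r12, r23] using h3

/-- right translation by `y`, as a permutation -/
noncomputable def Rperm (h : IsSquareFreeSolution r) (y : X) : Equiv.Perm X :=
  Equiv.ofBijective _ (h.nondegR y)

theorem Rperm_apply (h : IsSquareFreeSolution r) (y a : X) :
    Rperm h y a = (r (a, y)).2 := rfl

/-- the right action of the structure group on `X`, as an anti-homomorphism -/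
noncomputable def Rop (h : IsSquareFreeSolution r) :
    PresentedGroup (structRels r) →* (Equiv.Perm X)ᵐᵒᵖ :=
  PresentedGroup.toGroup (f := fun x => MulOpposite.op (Rperm h x)) (by
    rintro w ⟨x, y, rfl⟩
    simp only [map_mul, map_inv, FreeGroup.lift_apply_of]
    rw [mul_inv_eq_one]
    rw [← MulOpposite.op_mul, ← MulOpposite.op_mul]
    congr 1
    ext a
    simp only [Equiv.Perm.mul_apply, Rperm_apply]
    exact auxYB3 h a x y)

noncomputable def rr (h : IsSquareFreeSolution r) (g : PresentedGroup (structRels r)) (a : X) : X :=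
  (MulOpposite.unop (Rop h g)) a

theorem rr_one (h : IsSquareFreeSolution r) (a : X) : rr h 1 a = a := by
  simp [rr]

theorem rr_mul (h : IsSquareFreeSolution r) (u v : PresentedGroup (structRels r)) (a : X) :
    rr h (u * v) a = rr h v (rr h u a) := by
  simp [rr]

theorem rr_of (h : IsSquareFreeSolution r) (y a : X) :
    rr h (PresentedGroup.of y) a = (r (a, y)).2 := by
  simp [rr, Rop, PresentedGroup.toGroup.of, Rperm_apply]

theorem rr_inv_cancel (h : IsSquareFreeSolution r) (u : PresentedGroup (structRels r)) (a : X) :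
    rr h u⁻¹ (rr h u a) = a := by
  rw [← rr_mul, mul_inv_cancel, rr_one]

theorem rr_cancel_inv (h : IsSquareFreeSolution r) (u : PresentedGroup (structRels r)) (a : X) :
    rr h u (rr h u⁻¹ a) = a := by
  rw [← rr_mul, inv_mul_cancel, rr_one]

theorem rr_of_self (h : IsSquareFreeSolution r) (b : X) :
    rr h (PresentedGroup.of b) b = b := by
  rw [rr_of, auxSq2 h]

theorem rr_inv_of_self (h : IsSquareFreeSolution r) (b : X) :
    rr h (PresentedGroup.of b)⁻¹ b = b := by
  have := rr_inv_cancel h (PresentedGroup.of b) b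
  rwa [rr_of_self h b] at this


open PresentedGroup in
/-- the left translation `Λ_x` on the structure group -/
noncomputable def Lam (h : IsSquareFreeSolution r) (x : X) :
    Equiv.Perm (PresentedGroup (structRels r)) where
  toFun v := of x * v * (of (rr h v x))⁻¹
  invFun w := (of x)⁻¹ * w * of (rr h w x)
  left_inv v := by
    have e1 : rr h ((of x : PresentedGroup (structRels r)) * v * (of (rr h v x))⁻¹) x
        = rr h v x := by
      rw [rr_mul, rr_mul, rr_of_self h, rr_inv_of_self h]
    dsimp only
    rw [e1]; group
  right_inv w := by
    have e2 : rr h (((of x : PresentedGroup (structRels r)))⁻¹ * w * of (rr h w x)) x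
        = rr h w x := by
      rw [rr_mul, rr_mul, rr_inv_of_self h, rr_of_self h]
    dsimp only
    rw [e2]; group

theorem Lam_apply (h : IsSquareFreeSolution r) (x : X) (v : PresentedGroup (structRels r)) :
    Lam h x v = PresentedGroup.of x * v * (PresentedGroup.of (rr h v x))⁻¹ := rfl

/-- the defining relation, in the presented group -/
theorem auxRel (x y : X) :
    (PresentedGroup.of x : PresentedGroup (structRels r)) * PresentedGroup.of y =
      PresentedGroup.of ((r (x, y)).1) * PresentedGroup.of ((r (x, y)).2) := by
  have hmem : (FreeGroup.of x * FreeGroup.of y *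
      (FreeGroup.of ((r (x, y)).1) * FreeGroup.of ((r (x, y)).2))⁻¹) ∈
      Subgroup.normalClosure (structRels r) :=
    Subgroup.subset_normalClosure ⟨x, y, rfl⟩
  have h1 : (PresentedGroup.mk (structRels r)) (FreeGroup.of x * FreeGroup.of y *
      (FreeGroup.of ((r (x, y)).1) * FreeGroup.of ((r (x, y)).2))⁻¹) = 1 :=
    (QuotientGroup.eq_one_iff _).2 hmem
  rw [map_mul, map_mul, map_inv, map_mul] at h1
  exact mul_inv_eq_one.mp h1

open PresentedGroup in
theorem Lam_apply2 (h : IsSquareFreeSolution r) (x y : X) (v : PresentedGroup (structRels r)) :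
    Lam h x (Lam h y v) =
      (of x * of y) * v *
        (of (rr h ((of (rr h v y) : PresentedGroup (structRels r)))⁻¹
            (rr h v (rr h (of y : PresentedGroup (structRels r)) x))) * of (rr h v y))⁻¹ := by
  rw [Lam_apply, Lam_apply, rr_mul, rr_mul]
  group

open PresentedGroup in
theorem lamRelCheck (h : IsSquareFreeSolution r) (x y : X) (v : PresentedGroup (structRels r)) :
    Lam h x (Lam h y v) = Lam h ((r (x, y)).1) (Lam h ((r (x, y)).2) v) := by
  rw [Lam_apply2, Lam_apply2, rr_of h y x, rr_of h ((r (x, y)).2) ((r (x, y)).1),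
    auxInv2 h x y]
  set b0 := rr h v y with hb0
  set c := rr h v ((r (x, y)).2) with hc
  set p := rr h ((of b0 : PresentedGroup (structRels r)))⁻¹ c with hp
  set q := rr h ((of c : PresentedGroup (structRels r)))⁻¹ b0 with hq
  have h2 : (r (p, b0)).2 = c := by
    have e : rr h (of b0 : PresentedGroup (structRels r)) p = (r (p, b0)).2 := rr_of h b0 p
    rw [← e, hp, rr_cancel_inv]
  have h1 : (r (p, b0)).1 = q := by
    have e : rr h (of c : PresentedGroup (structRels r)) ((r (p, b0)).1) = b0 := by
      rw [rr_of, ← h2]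
      exact auxInv2 h _ _
    have e' := congrArg (rr h ((of c : PresentedGroup (structRels r)))⁻¹) e
    rwa [rr_inv_cancel, ← hq] at e'
  have key : (of p : PresentedGroup (structRels r)) * of b0 = of q * of c := by
    rw [auxRel, h1, h2]
  rw [auxRel x y, key]

/-- the left action of the structure group on itself -/
noncomputable def Lamh (h : IsSquareFreeSolution r) :
    PresentedGroup (structRels r) →* Equiv.Perm (PresentedGroup (structRels r)) :=
  PresentedGroup.toGroup (f := Lam h) (by
    rintro w ⟨x, y, rfl⟩
    simp only [map_mul, map_inv, FreeGroup.lift_apply_of]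
    rw [mul_inv_eq_one]
    ext v
    simp only [Equiv.Perm.mul_apply]
    exact lamRelCheck h x y v)

theorem Lamh_of (h : IsSquareFreeSolution r) (x : X) :
    Lamh h (PresentedGroup.of x) = Lam h x := PresentedGroup.toGroup.of _

theorem Lamh_of_apply (h : IsSquareFreeSolution r) (x : X) (v : PresentedGroup (structRels r)) :
    Lamh h (PresentedGroup.of x) v =
      PresentedGroup.of x * v * (PresentedGroup.of (rr h v x))⁻¹ := by
  rw [Lamh_of]; rfl

theorem Lamh_mul_apply (h : IsSquareFreeSolution r) (u v w : PresentedGroup (structRels r)) :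
    Lamh h (u * v) w = Lamh h u (Lamh h v w) := by
  rw [map_mul]; rfl

theorem mu_of (h : IsSquareFreeSolution r) (x : X) (v : PresentedGroup (structRels r)) :
    (Lamh h (PresentedGroup.of x) v)⁻¹ * PresentedGroup.of x * v =
      PresentedGroup.of (rr h v x) := by
  rw [Lamh_of_apply]; group


theorem auxInd {rels : Set (FreeGroup X)} {C : PresentedGroup rels → Prop}
    (h1 : C 1) (hof : ∀ x : X, C (PresentedGroup.of x))
    (hinv : ∀ g, C g → C g⁻¹) (hmul : ∀ g g', C g → C g' → C (g * g')) :
    ∀ g : PresentedGroup rels, C g := by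
  intro g
  induction g using PresentedGroup.induction_on with
  | H z =>
    induction z using FreeGroup.induction_on with
    | C1 => exact h1
    | of x => exact hof x
    | inv_of x hx => exact hinv _ hx
    | mul a b ha hb => exact hmul _ _ ha hb

theorem lam_one (h : IsSquareFreeSolution r) :
    ∀ u : PresentedGroup (structRels r), Lamh h u 1 = 1 := by
  refine auxInd ?_ ?_ ?_ ?_
  · simp
  · intro x
    rw [Lamh_of_apply, rr_one]
    group
  · intro u hu
    apply (Lamh h u).injective
    rw [← Lamh_mul_apply, mul_inv_cancel, map_one (f := Lamh h), Equiv.Perm.one_apply, hu]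
  · intro u v hu hv
    rw [Lamh_mul_apply, hv, hu]

theorem lamE (h : IsSquareFreeSolution r) :
    ∀ u v w : PresentedGroup (structRels r),
      Lamh h u (v * w) = Lamh h u v * Lamh h ((Lamh h u v)⁻¹ * u * v) w := by
  refine auxInd ?_ ?_ ?_ ?_
  · intro v w
    simp [Equiv.Perm.one_apply]
  · intro x v w
    rw [mu_of]
    simp only [Lamh_of_apply]
    rw [rr_mul]
    group
  · intro u hu v w
    apply (Lamh h u).injective
    have hB : Lamh h u (Lamh h u⁻¹ (v * w)) = v * w := by
      rw [← Lamh_mul_apply, mul_inv_cancel, map_one (f := Lamh h), Equiv.Perm.one_apply]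
    have hA : Lamh h u (Lamh h u⁻¹ v) = v := by
      rw [← Lamh_mul_apply, mul_inv_cancel, map_one (f := Lamh h), Equiv.Perm.one_apply]
    rw [hB, hu, hA, ← Lamh_mul_apply]
    have hone : (v⁻¹ * u * Lamh h u⁻¹ v) * ((Lamh h u⁻¹ v)⁻¹ * u⁻¹ * v) = 1 := by group
    rw [hone, map_one (f := Lamh h), Equiv.Perm.one_apply]
  · intro u₁ u₂ hu₁ hu₂ v w
    rw [Lamh_mul_apply, hu₂, hu₁, ← Lamh_mul_apply, ← Lamh_mul_apply]
    have : ((Lamh h (u₁ * u₂) v)⁻¹ * u₁ * Lamh h u₂ v) * ((Lamh h u₂ v)⁻¹ * u₂ * v)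
        = (Lamh h (u₁ * u₂) v)⁻¹ * (u₁ * u₂) * v := by group
    rw [this]

variable (L : PresentedGroup (structRels r) →* Equiv.Perm X)

theorem lamF (h : IsSquareFreeSolution r)
    (hL : ∀ x y : X, L (PresentedGroup.of x) y = (r (x, y)).1) :
    ∀ u : PresentedGroup (structRels r), ∀ y : X,
      Lamh h u (PresentedGroup.of y) = PresentedGroup.of (L u y) := by
  refine auxInd ?_ ?_ ?_ ?_
  · intro y
    simp [Equiv.Perm.one_apply]
  · intro x y
    rw [Lamh_of_apply, rr_of, auxRel x y, hL]
    group
  · intro u hu y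
    apply (Lamh h u).injective
    have hB : Lamh h u (Lamh h u⁻¹ (PresentedGroup.of y)) = PresentedGroup.of y := by
      rw [← Lamh_mul_apply, mul_inv_cancel, map_one (f := Lamh h), Equiv.Perm.one_apply]
    rw [hB, hu, map_inv, ← Equiv.Perm.mul_apply, mul_inv_cancel, Equiv.Perm.one_apply]
  · intro u₁ u₂ hu₁ hu₂ y
    rw [Lamh_mul_apply, hu₂, hu₁, map_mul, Equiv.Perm.mul_apply]

theorem lamJ (h : IsSquareFreeSolution r)
    (hL : ∀ x y : X, L (PresentedGroup.of x) y = (r (x, y)).1) :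
    ∀ u : PresentedGroup (structRels r), ∀ x : X,
      L (Lamh h (PresentedGroup.of x) u) (rr h u x) = x := by
  refine auxInd ?_ ?_ ?_ ?_
  · intro x
    rw [rr_one, lam_one h, map_one (f := L), Equiv.Perm.one_apply]
  · intro y x
    rw [lamF L h hL, hL x y, rr_of, hL]
    exact auxInv1 h x y
  · intro u hu x
    have hrc : rr h u (rr h u⁻¹ x) = x := rr_cancel_inv h u x
    have e : Lamh h (PresentedGroup.of x) u⁻¹
        = (Lamh h (PresentedGroup.of (rr h u⁻¹ x)) u)⁻¹ := by
      rw [Lamh_of_apply, Lamh_of_apply, hrc]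
      group
    rw [e, map_inv]
    have hthis := hu (rr h u⁻¹ x)
    rw [hrc] at hthis
    have goal' : (L (Lamh h (PresentedGroup.of (rr h u⁻¹ x)) u))⁻¹
        (L (Lamh h (PresentedGroup.of (rr h u⁻¹ x)) u) x) = x := Equiv.symm_apply_apply _ _
    rwa [hthis] at goal'
  · intro u₁ u₂ hu₁ hu₂ x
    have e : Lamh h (PresentedGroup.of x) (u₁ * u₂)
        = Lamh h (PresentedGroup.of x) u₁ * Lamh h (PresentedGroup.of (rr h u₁ x)) u₂ := by
      rw [lamE h (PresentedGroup.of x) u₁ u₂, mu_of]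
    rw [e, rr_mul, map_mul, Equiv.Perm.mul_apply, hu₂, hu₁]

theorem lamH (h : IsSquareFreeSolution r)
    (hL : ∀ x y : X, L (PresentedGroup.of x) y = (r (x, y)).1)
    (u : PresentedGroup (structRels r)) (hu : L u = 1) (x : X) : rr h u x = x := by
  have hJ := lamJ L h hL u x
  rw [Lamh_of_apply, map_mul, map_mul, map_inv, hu, mul_one, Equiv.Perm.mul_apply] at hJ
  have hfix : L (PresentedGroup.of (rr h u x)) (rr h u x) = rr h u x := by
    rw [hL, auxSq1 h]
  have hb : (L (PresentedGroup.of (rr h u x)))⁻¹ (rr h u x) = rr h u x := by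
    have h2 := congrArg (fun t => (L (PresentedGroup.of (rr h u x)))⁻¹ t) hfix
    simpa using h2.symm
  rw [hb, hL] at hJ
  exact (h.nondegL x).1 (hJ.trans (auxSq1 h x).symm)

theorem lamD (h : IsSquareFreeSolution r)
    (hL : ∀ x y : X, L (PresentedGroup.of x) y = (r (x, y)).1) :
    ∀ v u : PresentedGroup (structRels r), L u = 1 → Lamh h u v = v := by
  refine auxInd ?_ ?_ ?_ ?_
  · intro u hu
    exact lam_one h u
  · intro y u hu
    rw [lamF L h hL, hu, Equiv.Perm.one_apply]
  · intro v hv u hu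
    have hu' : L (v * u * v⁻¹) = 1 := by simp [map_mul, map_inv, hu]
    have e := lamE h (v * u * v⁻¹) v v⁻¹
    rw [mul_inv_cancel, lam_one h, hv (v * u * v⁻¹) hu'] at e
    have hc : v⁻¹ * (v * u * v⁻¹) * v = u := by group
    rw [hc] at e
    exact (eq_inv_of_mul_eq_one_right e.symm)
  · intro v w hv hw u hu
    rw [lamE h u v w, hv u hu]
    have hu' : L (v⁻¹ * u * v) = 1 := by simp [map_mul, map_inv, hu]
    rw [hw _ hu']

theorem lamG (h : IsSquareFreeSolution r)
    (hL : ∀ x y : X, L (PresentedGroup.of x) y = (r (x, y)).1) :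
    ∀ a : PresentedGroup (structRels r), ∀ u : PresentedGroup (structRels r),
      L u = 1 → Lamh h a u = a * u * a⁻¹ := by
  refine auxInd ?_ ?_ ?_ ?_
  · intro u hu
    simp [Equiv.Perm.one_apply]
  · intro x u hu
    rw [Lamh_of_apply, lamH L h hL u hu x]
  · intro a ha u hu
    apply (Lamh h a).injective
    have hB : Lamh h a (Lamh h a⁻¹ u) = u := by
      rw [← Lamh_mul_apply, mul_inv_cancel, map_one (f := Lamh h), Equiv.Perm.one_apply]
    have hu' : L (a⁻¹ * u * (a⁻¹)⁻¹) = 1 := by simp [map_mul, map_inv, hu]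
    rw [hB, ha _ hu']
    group
  · intro a₁ a₂ ha₁ ha₂ u hu
    have hu' : L (a₂ * u * a₂⁻¹) = 1 := by simp [map_mul, map_inv, hu]
    rw [Lamh_mul_apply, ha₂ u hu, ha₁ _ hu']
    group

end Aux

/-- the kernel of the canonical map `L : G(X,r) → Sym(X)` is abelian
(it is automatically normal, being a kernel). -/
theorem stmt4 {X : Type*} (r : X × X → X × X) (h : IsSquareFreeSolution r)
    (L : PresentedGroup (structRels r) →* Equiv.Perm X)
    (hL : ∀ x y : X, L (PresentedGroup.of x) y = (r (x, y)).1) :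
    ∀ u v : PresentedGroup (structRels r), u ∈ L.ker → v ∈ L.ker → u * v = v * u := by
  intro u v hu hv
  have hu' : L u = 1 := MonoidHom.mem_ker.mp hu
  have hv' : L v = 1 := MonoidHom.mem_ker.mp hv
  have h1 : Lamh h v u = u := lamD L h hL u v hv'
  have h2 : Lamh h v u = v * u * v⁻¹ := lamG L h hL v u hu'
  have h3 : v * u * v⁻¹ = u := h2.symm.trans h1
  have h4 : v * u = (v * u * v⁻¹) * v := by group
  rw [h3] at h4
  exact h4.symm


end YBPaper
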